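/- arXiv:1810.13158 — 2 statements merged into one kernel-verified Lean document; each statement's English description precedes it below -/
import Mathlib

section
/- Let κ, T, K > 0 and let g be analytic on S_κ := {z ∈ ℂ : dist(z, [0,∞)) < κ} with |g(z)| ≤ K e^{|z|/T} for all z ∈ S_κ. Define f_g(t) := (1/t) ∫_0^∞ g(τ) e^{-τ/t} dτ for t ≠ 0 with Re(1/t) > 1/T. Then for every κ̄ with 0 < κ̄ < κ and every T̄ with 0 < T̄ < T there exists a constant K' > 0 such that for every r ∈ ℕ and every t with Re(1/t) > 1/T̄ one has |f_g(t) − Σ_{k=0}^{r-1} (g^{(k)}(0)) t^k| ≤ K' · r! · κ̄^{-r} · |t|^r, where g^{(k)}(0) denotes the k-th complex derivative of g at 0 divided by k! and multiplied by k! (i.e. the k-th Taylor coefficient of g at 0 times k!). -/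
open MeasureTheory Set Metric Filter Complex intervalIntegral


lemma aux_exp_integral {b : ℝ} (hb : 0 < b) :
    ∫ τ in Ioi (0:ℝ), Real.exp (-(b*τ)) = b⁻¹ := by
  have h : ∀ x ∈ Ici (0:ℝ), HasDerivAt (fun τ : ℝ => -b⁻¹ * Real.exp (-(b*τ)))
      (Real.exp (-(b*x))) x := by
    intro x _
    have h1 : HasDerivAt (fun τ : ℝ => -(b*τ)) (-b) x := by
      exact ((hasDerivAt_id x).const_mul b).neg.congr_deriv (by simp)
    have h2 := (h1.exp).const_mul (-b⁻¹)
    refine h2.congr_deriv ?_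
    linear_combination (Real.exp (-(b*x))) * (inv_mul_cancel₀ hb.ne')
  have hint : IntegrableOn (fun τ : ℝ => Real.exp (-(b*τ))) (Ioi (0:ℝ)) := by
    simpa [neg_mul] using exp_neg_integrableOn_Ioi 0 hb
  have htend : Tendsto (fun τ : ℝ => -b⁻¹ * Real.exp (-(b*τ))) atTop (nhds 0) := by
    have : Tendsto (fun τ : ℝ => Real.exp (-(b*τ))) atTop (nhds 0) := by
      have h0 : Tendsto (fun x : ℝ => b * x) atTop atTop := tendsto_id.const_mul_atTop hb
      have := Real.tendsto_exp_neg_atTop_nhds_zero.comp h0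
      exact this
    simpa using this.const_mul (-b⁻¹)
  have := integral_Ioi_of_hasDerivAt_of_tendsto' h hint htend
  simp at this
  rw [this]


lemma aux_cauchy {g : ℂ → ℂ} {c : ℂ} {σ M : ℝ} (hσ : 0 < σ)
    (hd : DifferentiableOn ℂ g (closedBall c σ))
    (hM : ∀ z ∈ Metric.sphere c σ, ‖g z‖ ≤ M) (n : ℕ) :
    ‖iteratedDeriv n g c‖ ≤ n.factorial * σ⁻¹ ^ n * M := by
  set R : NNReal := σ.toNNReal with hR
  have hRσ : (R : ℝ) = σ := Real.coe_toNNReal σ hσ.le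
  have hR0 : 0 < R := by simp [hR]; exact hσ
  have hd' : DifferentiableOn ℂ g (closedBall c R) := by rw [hRσ]; exact hd
  have hp : HasFPowerSeriesOnBall g (cauchyPowerSeries g c R) c R :=
    hd'.hasFPowerSeriesOnBall hR0
  have h1 : iteratedDeriv n g c = n.factorial • (cauchyPowerSeries g c R n fun _ => (1:ℂ)) := by
    rw [iteratedDeriv_eq_iteratedFDeriv, ← hp.factorial_smul]
  have h2 : ‖cauchyPowerSeries g c R n fun _ => (1:ℂ)‖ ≤ ‖cauchyPowerSeries g c R n‖ := by
    have := (cauchyPowerSeries g c R n).le_opNorm (fun _ => (1:ℂ))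
    simpa using this
  have h3 : ‖cauchyPowerSeries g c R n‖ ≤
      ((2 * Real.pi)⁻¹ * ∫ θ : ℝ in (0)..2 * Real.pi, ‖g (circleMap c R θ)‖) * |(R:ℝ)|⁻¹ ^ n :=
    norm_cauchyPowerSeries_le g c R n
  have h4 : (∫ θ : ℝ in (0)..2 * Real.pi, ‖g (circleMap c R θ)‖) ≤ 2 * Real.pi * M := by
    have hcont : ContinuousOn (fun θ : ℝ => ‖g (circleMap c R θ)‖) (uIcc 0 (2*Real.pi)) := by
      apply ContinuousOn.norm
      apply hd.continuousOn.comp (continuous_circleMap c R).continuousOn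
      intro θ _
      have : circleMap c R θ ∈ Metric.sphere c σ := by
        simpa [hRσ] using circleMap_mem_sphere c hσ.le θ
      exact sphere_subset_closedBall this
    calc (∫ θ : ℝ in (0)..2 * Real.pi, ‖g (circleMap c R θ)‖)
        ≤ ∫ _θ : ℝ in (0)..2 * Real.pi, M := by
          apply intervalIntegral.integral_mono_on Real.two_pi_pos.le
            (hcont.intervalIntegrable) intervalIntegrable_const
          intro θ _
          apply hM
          simpa [hRσ] using circleMap_mem_sphere c hσ.le θ
      _ = 2 * Real.pi * M := by simp [mul_comm]
  calc ‖iteratedDeriv n g c‖ = n.factorial * ‖cauchyPowerSeries g c R n fun _ => (1:ℂ)‖ := by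
        rw [h1, ← Nat.cast_smul_eq_nsmul ℝ, norm_smul, Real.norm_natCast]
    _ ≤ n.factorial * (((2 * Real.pi)⁻¹ * ∫ θ : ℝ in (0)..2 * Real.pi, ‖g (circleMap c R θ)‖) *
        |(R:ℝ)|⁻¹ ^ n) := by
        apply mul_le_mul_of_nonneg_left (h2.trans h3) (by positivity)
    _ ≤ n.factorial * (((2 * Real.pi)⁻¹ * (2 * Real.pi * M)) * |(R:ℝ)|⁻¹ ^ n) := by
        apply mul_le_mul_of_nonneg_left _ (by positivity)
        apply mul_le_mul_of_nonneg_right _ (by positivity)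
        exact mul_le_mul_of_nonneg_left h4 (by positivity)
    _ = n.factorial * σ⁻¹ ^ n * M := by
        rw [hRσ, abs_of_pos hσ]
        field_simp


lemma aux_geom {q : ℝ} (hq0 : 0 ≤ q) (hq1 : q < 1) (r : ℕ) :
    (r + 1 : ℝ) * q ^ r ≤ (1 - q)⁻¹ := by
  have h1 : (r + 1 : ℝ) * q ^ r = ∑ _j ∈ Finset.range (r+1), q ^ r := by
    simp [Finset.sum_const, mul_comm]
  have h2 : ∑ _j ∈ Finset.range (r+1), q ^ r ≤ ∑ j ∈ Finset.range (r+1), q ^ j := by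
    apply Finset.sum_le_sum
    intro j hj
    exact pow_le_pow_of_le_one hq0 hq1.le (by simpa using Nat.lt_succ_iff.mp (Finset.mem_range.mp hj))
  have h3 : ∑ j ∈ Finset.range (r+1), q ^ j ≤ (1 - q)⁻¹ := by
    have hq : q ≠ 1 := ne_of_lt hq1
    rw [geom_sum_eq hq]
    have h1q : 0 < 1 - q := by linarith
    have hpow : 0 ≤ q ^ (r+1) := pow_nonneg hq0 _
    have heq : (q ^ (r+1) - 1) / (q - 1) = (1 - q ^ (r+1)) / (1 - q) := by
      rw [div_eq_div_iff (by linarith) (by linarith)]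
      ring
    rw [heq, div_le_iff₀ h1q, inv_mul_cancel₀ h1q.ne']
    linarith
  linarith [h1, h2, h3]

lemma aux_key {σ κbar c2 : ℝ} (hκbar : 0 < κbar) (hσ : κbar < σ) (hc2 : 0 ≤ c2) (r : ℕ) :
    (r.factorial : ℝ) * σ⁻¹ ^ r + ((r+1).factorial : ℝ) * σ⁻¹ ^ (r+1) * c2 ≤
      (1 + c2 / (σ - κbar)) * ((r.factorial : ℝ) * κbar⁻¹ ^ r) := by
  have hσ0 : 0 < σ := hκbar.trans hσ
  set q : ℝ := κbar / σ with hq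
  have hq0 : 0 < q := by positivity
  have hq1 : q < 1 := by rw [hq, div_lt_one hσ0]; exact hσ
  have hσinv : σ⁻¹ = κbar⁻¹ * q := by rw [hq]; field_simp
  have hgeom := aux_geom hq0.le hq1 r
  have h1mq : (1 - q)⁻¹ = σ / (σ - κbar) := by
    rw [hq, eq_div_iff (by intro h; exact absurd h (by intro h'; linarith) : σ - κbar ≠ 0)]
    have : (1 - κbar/σ) = (σ - κbar)/σ := by field_simp
    rw [this, inv_div]
    rw [div_mul_eq_mul_div, mul_div_assoc, div_self (by linarith : σ - κbar ≠ 0), mul_one]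
  have key : q ^ r + (r+1 : ℝ) * q ^ r * σ⁻¹ * c2 ≤ 1 + c2 / (σ - κbar) := by
    have e1 : q ^ r ≤ 1 := pow_le_one₀ hq0.le hq1.le
    have e2 : (r+1 : ℝ) * q ^ r * σ⁻¹ * c2 ≤ c2 / (σ - κbar) := by
      have := mul_le_mul_of_nonneg_right hgeom (by positivity : (0:ℝ) ≤ σ⁻¹ * c2)
      calc (r+1 : ℝ) * q ^ r * σ⁻¹ * c2 = (r+1 : ℝ) * q ^ r * (σ⁻¹ * c2) := by ring
        _ ≤ (1-q)⁻¹ * (σ⁻¹ * c2) := this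
        _ = c2 / (σ - κbar) := by
            rw [h1mq]
            have hne : σ - κbar ≠ 0 := by intro h; linarith [h]
            have hσκ : (-(σ*κbar)+σ^2) = σ*(σ-κbar) := by ring
            rw [div_mul_eq_mul_div, ← mul_assoc, mul_inv_cancel₀ hσ0.ne', one_mul]
    linarith
  calc (r.factorial : ℝ) * σ⁻¹ ^ r + ((r+1).factorial : ℝ) * σ⁻¹ ^ (r+1) * c2
      = (r.factorial : ℝ) * κbar⁻¹ ^ r * (q ^ r + (r+1 : ℝ) * q ^ r * σ⁻¹ * c2) := by
        rw [Nat.factorial_succ, hσinv]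
        push_cast
        ring
    _ ≤ (r.factorial : ℝ) * κbar⁻¹ ^ r * (1 + c2 / (σ - κbar)) := by
        apply mul_le_mul_of_nonneg_left key (by positivity)
    _ = (1 + c2 / (σ - κbar)) * ((r.factorial : ℝ) * κbar⁻¹ ^ r) := by ring


lemma aux_tendsto {b : ℝ} (C : ℝ) (hb : 0 < b) :
    Filter.Tendsto (fun τ : ℝ => C * Real.exp (-(b*τ))) Filter.atTop (nhds 0) := by
  have h0 : Filter.Tendsto (fun x : ℝ => b * x) Filter.atTop Filter.atTop :=
    tendsto_id.const_mul_atTop hb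
  have h1 : Filter.Tendsto (fun τ : ℝ => Real.exp (-(b*τ))) Filter.atTop (nhds 0) :=
    Real.tendsto_exp_neg_atTop_nhds_zero.comp h0
  simpa using h1.const_mul C




/-- Nevanlinna's theorem, Laplace-transform direction: if `g` is analytic on
`S_κ = {z : ℂ | dist(z, [0,∞)) < κ}` with `|g(z)| ≤ K e^{|z|/T}` there, then its Laplace
transform `f_g(t) = (1/t) ∫_0^∞ g(τ) e^{-τ/t} dτ` admits, for every `0 < κ̄ < κ` and
`0 < T̄ < T`, an asymptotic expansion with coefficients `g^{(k)}(0)` and remainder bound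
`K' · r! · κ̄⁻ʳ · |t|^r`, valid for all `t` with `Re (1/t) > 1/T̄`. -/
theorem stmt_6 (κ T K : ℝ) (hκ : 0 < κ) (hT : 0 < T) (hK : 0 < K) (g : ℂ → ℂ)
    (hg : AnalyticOnNhd ℂ g {z : ℂ | Metric.infDist z (Complex.ofReal '' Set.Ici 0) < κ})
    (hbound : ∀ z : ℂ, Metric.infDist z (Complex.ofReal '' Set.Ici 0) < κ →
      ‖g z‖ ≤ K * Real.exp (‖z‖ / T)) :
    ∀ κbar Tbar : ℝ, 0 < κbar → κbar < κ → 0 < Tbar → Tbar < T →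
      ∃ K' : ℝ, 0 < K' ∧
        ∀ (r : ℕ) (t : ℂ), t ≠ 0 → 1 / Tbar < (1 / t).re →
          ‖(1 / t) * (∫ τ : ℝ in Set.Ioi (0 : ℝ), g τ * Complex.exp (-(τ : ℂ) / t)) -
                ∑ k ∈ Finset.range r, iteratedDeriv k g 0 * t ^ k‖ ≤
            K' * (Nat.factorial r) * κbar⁻¹ ^ r * ‖t‖ ^ r := by
  intro κbar Tbar hκbar0 hκbarκ hTbar0 hTbarT
  set A : Set ℂ := Complex.ofReal '' Set.Ici 0 with hA
  set S : Set ℂ := {z : ℂ | Metric.infDist z A < κ} with hS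
  set σ : ℝ := (κbar + κ)/2 with hσdef
  have hσ0 : 0 < σ := by rw [hσdef]; linarith
  have hσκ : σ < κ := by rw [hσdef]; linarith
  have hκbarσ : κbar < σ := by rw [hσdef]; linarith
  set A0 : ℝ := K * Real.exp (σ/T) with hA0
  have hA0pos : 0 < A0 := by positivity
  set c2 : ℝ := (1/Tbar - 1/T)⁻¹ with hc2def
  have hTT : (0:ℝ) < 1/Tbar - 1/T := by
    have h1 : 1/T < 1/Tbar := by
      apply one_div_lt_one_div_of_lt hTbar0 hTbarT
    linarith
  have hc2pos : 0 < c2 := by rw [hc2def]; positivity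
  -- membership lemmas
  have hmemA : ∀ x : ℝ, 0 ≤ x → ((x:ℂ) ∈ A) := by
    intro x hx; exact ⟨x, hx, rfl⟩
  have hmemS : ∀ x : ℝ, 0 ≤ x → ((x:ℂ) ∈ S) := by
    intro x hx
    have : Metric.infDist (x:ℂ) A = 0 := Metric.infDist_zero_of_mem (hmemA x hx)
    simp only [hS, Set.mem_setOf_eq, this]; exact hκ
  have hball : ∀ x : ℝ, 0 ≤ x → Metric.closedBall (x:ℂ) σ ⊆ S := by
    intro x hx z hz
    simp only [hS, Set.mem_setOf_eq]
    calc Metric.infDist z A ≤ Metric.infDist (x:ℂ) A + dist z (x:ℂ) :=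
          Metric.infDist_le_infDist_add_dist
      _ = dist z (x:ℂ) := by rw [Metric.infDist_zero_of_mem (hmemA x hx), zero_add]
      _ ≤ σ := Metric.mem_closedBall.mp hz
      _ < κ := hσκ
  have hSopen : IsOpen S := isOpen_lt (continuous_infDist_pt A) continuous_const
  -- analyticity of iterated derivatives
  have hGanal : ∀ n : ℕ, AnalyticOnNhd ℂ (iteratedDeriv n g) S := by
    intro n
    rw [iteratedDeriv_eq_iterate]
    exact hg.iterated_deriv n
  -- Cauchy-type derivative bound
  have hGbound : ∀ (n : ℕ) (x : ℝ), 0 ≤ x →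
      ‖iteratedDeriv n g (x:ℂ)‖ ≤ n.factorial * σ⁻¹ ^ n * (A0 * Real.exp (x/T)) := by
    intro n x hx
    have hMeq : A0 * Real.exp (x/T) = K * Real.exp ((x+σ)/T) := by
      rw [hA0, add_div, Real.exp_add]
      ring
    rw [hMeq]
    apply aux_cauchy hσ0 ((hg.differentiableOn).mono (hball x hx))
    intro z hz
    have hzS : z ∈ S := hball x hx (sphere_subset_closedBall hz)
    have hzS' : Metric.infDist z A < κ := hzS
    have h1 : ‖g z‖ ≤ K * Real.exp (‖z‖ / T) := hbound z hzS'
    have h2 : ‖z‖ ≤ x + σ := by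
      have e1 : ‖z - (x:ℂ)‖ = σ := by
        rw [← dist_eq_norm]
        exact Metric.mem_sphere.mp hz
      have e2 : ‖z‖ - ‖(x:ℂ)‖ ≤ ‖z - (x:ℂ)‖ := norm_sub_norm_le _ _
      have e3 : ‖(x:ℂ)‖ = x := by
        rw [Complex.norm_real, Real.norm_eq_abs, _root_.abs_of_nonneg hx]
      calc ‖z‖ = ‖z‖ := rfl
        _ ≤ ‖z - (x:ℂ)‖ + ‖(x:ℂ)‖ := by linarith [e2]
        _ = x + σ := by rw [e1, e3]; ring
    calc ‖g z‖ ≤ K * Real.exp (‖z‖ / T) := h1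
      _ ≤ K * Real.exp ((x+σ)/T) := by
          apply mul_le_mul_of_nonneg_left _ hK.le
          apply Real.exp_le_exp.mpr
          gcongr
  have hσκbar : (0:ℝ) < σ - κbar := by linarith
  refine ⟨A0 * (1 + c2 / (σ - κbar)), by positivity, ?_⟩
  intro r t ht hret
  set x : ℝ := (1/t).re with hx
  have hxTbar : 1/Tbar < x := hret
  have hb : 0 < x - 1/T := by
    have : 1/Tbar - 1/T ≤ x - 1/T := by linarith
    linarith
  set b : ℝ := x - 1/T with hbdef
  have hbinv : b⁻¹ ≤ c2 := by
    rw [hc2def]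
    apply inv_anti₀ hTT
    linarith
  set E : ℝ → ℂ := fun τ => Complex.exp (-(τ:ℂ)/t) with hE
  have hEnorm : ∀ τ : ℝ, ‖E τ‖ = Real.exp (-(x*τ)) := by
    intro τ
    have hre : (-(τ:ℂ)/t).re = -(x*τ) := by
      rw [neg_div, Complex.neg_re, div_eq_mul_inv, Complex.re_ofReal_mul, hx, one_div]
      ring
    rw [hE]
    simp only [Complex.norm_exp, hre]
  set G : ℕ → ℝ → ℂ := fun n τ => iteratedDeriv n g (τ:ℂ) * E τ with hG
  -- pointwise bound for integrand
  have hptbound : ∀ (n : ℕ) (τ : ℝ), 0 ≤ τ →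
      ‖G n τ‖ ≤ (n.factorial * σ⁻¹ ^ n * A0) * Real.exp (-(b*τ)) := by
    intro n τ hτ
    have e1 : ‖G n τ‖ = ‖iteratedDeriv n g (τ:ℂ)‖ * Real.exp (-(x*τ)) := by
      rw [hG]
      simp only [norm_mul, hEnorm τ]
    rw [e1]
    have e2 := hGbound n τ hτ
    calc ‖iteratedDeriv n g (τ:ℂ)‖ * Real.exp (-(x*τ))
        ≤ (n.factorial * σ⁻¹ ^ n * (A0 * Real.exp (τ/T))) * Real.exp (-(x*τ)) := by
          apply mul_le_mul_of_nonneg_right e2 (Real.exp_nonneg _)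
      _ = (n.factorial * σ⁻¹ ^ n * A0) * (Real.exp (τ/T) * Real.exp (-(x*τ))) := by ring
      _ = (n.factorial * σ⁻¹ ^ n * A0) * Real.exp (-(b*τ)) := by
          rw [← Real.exp_add]
          congr 1
          rw [hbdef]
          ring
  -- integrability
  have hEcont : Continuous E := by
    rw [hE]
    exact (Complex.continuous_ofReal.neg.div_const t).cexp
  have hGcont : ∀ n : ℕ, ContinuousOn (G n) (Ioi (0:ℝ)) := by
    intro n
    apply ContinuousOn.mul _ hEcont.continuousOn
    apply ((hGanal n).continuousOn).comp Complex.continuous_ofReal.continuousOn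
    intro τ hτ
    exact hmemS τ (le_of_lt hτ)
  have hint : ∀ n : ℕ, IntegrableOn (G n) (Ioi (0:ℝ)) := by
    intro n
    apply Integrable.mono'
      (g := fun τ : ℝ => (n.factorial * σ⁻¹ ^ n * A0) * Real.exp (-(b*τ)))
    · have : IntegrableOn (fun τ : ℝ => Real.exp (-(b*τ))) (Ioi (0:ℝ)) := by
        simpa [neg_mul] using exp_neg_integrableOn_Ioi 0 hb
      exact this.const_mul _
    · exact ((hGcont n).aestronglyMeasurable measurableSet_Ioi)
    · filter_upwards [ae_restrict_mem measurableSet_Ioi] with τ hτ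
      exact hptbound n τ (le_of_lt hτ)
  set I : ℕ → ℂ := fun n => ∫ τ in Ioi (0:ℝ), G n τ with hI
  -- integration by parts
  have hIBP : ∀ n : ℕ, I n = t * iteratedDeriv n g 0 + t * I (n+1) := by
    intro n
    have hderiv : ∀ τ : ℝ, τ ∈ Ici (0:ℝ) → HasDerivAt (fun s : ℝ => -t * G n s)
        (G n τ - t * G (n+1) τ) τ := by
      intro τ hτ
      have hz : ((τ:ℂ)) ∈ S := hmemS τ hτ
      have hd1 : HasDerivAt (iteratedDeriv n g) (iteratedDeriv (n+1) g (τ:ℂ)) (τ:ℂ) := by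
        have h := ((hGanal n) _ hz).differentiableAt.hasDerivAt
        rwa [iteratedDeriv_succ]
      have hd1' : HasDerivAt (fun s : ℝ => iteratedDeriv n g (s:ℂ))
          (iteratedDeriv (n+1) g (τ:ℂ)) τ := hd1.comp_ofReal
      have hd2 : HasDerivAt (fun w : ℂ => Complex.exp (-w/t))
          (Complex.exp (-(τ:ℂ)/t) * (-1/t)) (τ:ℂ) := by
        have h0 : HasDerivAt (fun w : ℂ => -w/t) (-1/t) (τ:ℂ) := by
          have := ((hasDerivAt_id ((τ:ℂ))).neg.div_const t)
          simpa using this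
        have := h0.cexp
        simpa [neg_div] using this
      have hd2' : HasDerivAt E (Complex.exp (-(τ:ℂ)/t) * (-1/t)) τ := hd2.comp_ofReal
      have hprod := (hd1'.mul hd2').const_mul (-t)
      have heq : -t * (iteratedDeriv (n+1) g (τ:ℂ) * E τ +
          iteratedDeriv n g (τ:ℂ) * (Complex.exp (-(τ:ℂ)/t) * (-1/t))) =
          G n τ - t * G (n+1) τ := by
        rw [hG]
        have hEτ : E τ = Complex.exp (-(τ:ℂ)/t) := rfl
        rw [← hEτ]
        field_simp
        ring
      rw [← heq]
      exact hprod
    have hint' : IntegrableOn (fun τ : ℝ => G n τ - t * G (n+1) τ) (Ioi (0:ℝ)) :=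
      (hint n).sub ((hint (n+1)).const_mul t)
    have htend : Tendsto (fun τ : ℝ => -t * G n τ) atTop (nhds 0) := by
      apply squeeze_zero_norm' _ (aux_tendsto (‖t‖ * (n.factorial * σ⁻¹ ^ n * A0)) hb)
      filter_upwards [eventually_ge_atTop (0:ℝ)] with τ hτ
      rw [norm_mul, norm_neg]
      calc ‖t‖ * ‖G n τ‖ ≤ ‖t‖ * ((n.factorial * σ⁻¹ ^ n * A0) * Real.exp (-(b*τ))) := by
            apply mul_le_mul_of_nonneg_left (hptbound n τ hτ) (norm_nonneg t)
        _ = ‖t‖ * (n.factorial * σ⁻¹ ^ n * A0) * Real.exp (-(b*τ)) := by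
            ring
    have h0 := integral_Ioi_of_hasDerivAt_of_tendsto' hderiv hint' htend
    rw [integral_sub (hint n) ((hint (n+1)).const_mul t), MeasureTheory.integral_const_mul] at h0
    have hG0 : G n 0 = iteratedDeriv n g 0 := by
      rw [hG, hE]
      simp
    rw [hG0] at h0
    have : I n - t * I (n+1) = t * iteratedDeriv n g 0 := by
      rw [hI]
      rw [h0]
      ring
    linear_combination this
  -- expansion
  have hexp : I 0 = (∑ k ∈ Finset.range r, iteratedDeriv k g 0 * t^(k+1)) + t^r * I r := by
    induction r with
    | zero => simp
    | succ m ih =>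
        rw [Finset.sum_range_succ, ih, hIBP m]
        ring
  -- bound on I n
  have hIbound : ∀ n : ℕ, ‖I n‖ ≤ (n.factorial * σ⁻¹ ^ n * A0) * c2 := by
    intro n
    have h1 : ‖I n‖ ≤ ∫ τ in Ioi (0:ℝ), (n.factorial * σ⁻¹ ^ n * A0) * Real.exp (-(b*τ)) := by
      apply MeasureTheory.norm_integral_le_of_norm_le
      · have : IntegrableOn (fun τ : ℝ => Real.exp (-(b*τ))) (Ioi (0:ℝ)) := by
          simpa [neg_mul] using exp_neg_integrableOn_Ioi 0 hb
        exact this.const_mul _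
      · filter_upwards [ae_restrict_mem measurableSet_Ioi] with τ hτ
        exact hptbound n τ (le_of_lt hτ)
    have h2 : (∫ τ in Ioi (0:ℝ), (n.factorial * σ⁻¹ ^ n * A0) * Real.exp (-(b*τ)))
        = (n.factorial * σ⁻¹ ^ n * A0) * b⁻¹ := by
      rw [MeasureTheory.integral_const_mul, aux_exp_integral hb]
    rw [h2] at h1
    calc ‖I n‖ ≤ (n.factorial * σ⁻¹ ^ n * A0) * b⁻¹ := h1
      _ ≤ (n.factorial * σ⁻¹ ^ n * A0) * c2 := by
          apply mul_le_mul_of_nonneg_left hbinv (by positivity)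
  -- final computation
  have hI0 : (∫ τ : ℝ in Set.Ioi (0 : ℝ), g τ * Complex.exp (-(τ : ℂ) / t)) = I 0 := by
    rw [hI]
    apply setIntegral_congr_fun measurableSet_Ioi
    intro τ _
    simp [hG, hE, iteratedDeriv_zero]
  have hkey : (1/t) * I 0 - ∑ k ∈ Finset.range r, iteratedDeriv k g 0 * t^k =
      t^r * (iteratedDeriv r g 0 + I (r+1)) := by
    have e1 : (1/t) * (∑ k ∈ Finset.range r, iteratedDeriv k g 0 * t^(k+1)) =
        ∑ k ∈ Finset.range r, iteratedDeriv k g 0 * t^k := by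
      rw [Finset.mul_sum]
      apply Finset.sum_congr rfl
      intro k _
      rw [pow_succ]
      field_simp
    rw [hexp, hIBP r, mul_add, e1]
    field_simp
    ring
  rw [hI0, hkey]
  have hd0 : ‖iteratedDeriv r g 0‖ ≤ (r.factorial : ℝ) * σ⁻¹ ^ r * A0 := by
    have := hGbound r 0 le_rfl
    simpa using this
  have hnorm : ‖t^r * (iteratedDeriv r g 0 + I (r+1))‖ =
      ‖t‖ ^ r * ‖iteratedDeriv r g 0 + I (r+1)‖ := by
    rw [norm_mul, norm_pow]
  rw [hnorm]
  have hstep : ‖iteratedDeriv r g 0 + I (r+1)‖ ≤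
      (A0 * (1 + c2 / (σ - κbar))) * ((r.factorial : ℝ) * κbar⁻¹ ^ r) := by
    calc ‖iteratedDeriv r g 0 + I (r+1)‖ ≤ ‖iteratedDeriv r g 0‖ + ‖I (r+1)‖ := norm_add_le _ _
      _ ≤ ((r.factorial : ℝ) * σ⁻¹ ^ r * A0) + (((r+1).factorial : ℝ) * σ⁻¹ ^ (r+1) * A0) * c2 :=
          add_le_add hd0 (hIbound (r+1))
      _ = A0 * ((r.factorial : ℝ) * σ⁻¹ ^ r + ((r+1).factorial : ℝ) * σ⁻¹ ^ (r+1) * c2) := by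
          ring
      _ ≤ A0 * ((1 + c2 / (σ - κbar)) * ((r.factorial : ℝ) * κbar⁻¹ ^ r)) := by
          apply mul_le_mul_of_nonneg_left (aux_key hκbar0 hκbarσ hc2pos.le r) hA0pos.le
      _ = (A0 * (1 + c2 / (σ - κbar))) * ((r.factorial : ℝ) * κbar⁻¹ ^ r) := by ring
  calc ‖t‖ ^ r * ‖iteratedDeriv r g 0 + I (r+1)‖
      ≤ ‖t‖ ^ r * ((A0 * (1 + c2 / (σ - κbar))) * ((r.factorial : ℝ) * κbar⁻¹ ^ r)) := by
        apply mul_le_mul_of_nonneg_left hstep (by positivity)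
    _ = A0 * (1 + c2 / (σ - κbar)) * (r.factorial : ℝ) * κbar⁻¹ ^ r * ‖t‖ ^ r := by
        ring
end

section
/- Let κ, T > 0 and let f₁, f₂ be analytic functions on D_T := {t ∈ ℂ : t ≠ 0, Re(1/t) > 1/T} admitting asymptotic expansions with the SAME coefficient sequence (a_r)_{r∈ℕ}: there exist constants K₁, K₂ > 0 such that |f_i(t) − Σ_{k=0}^{r-1} a_k t^k| ≤ K_i · r! · κ^{-r} · |t|^r for i = 1, 2, all r ∈ ℕ and all t ∈ D_T. Then f₁ = f₂ on D_T; i.e. the Borel sum of a Borel summable formal power series is unique. -/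
open Real Filter Set
open scoped Topology

lemma aux_fact_le (n : ℕ) (hn : 1 ≤ n) :
    (Nat.factorial n : ℝ) ≤ Real.exp 1 * n * (n / Real.exp 1) ^ n := by
  induction n with
  | zero => omega
  | succ m ih =>
    rcases Nat.eq_or_lt_of_le hn with h1 | h1
    · obtain rfl : m = 0 := by omega
      norm_num [Nat.factorial]
    · have hm : 1 ≤ m := by omega
      have ihm := ih hm
      have hm0 : (0:ℝ) < m := by exact_mod_cast hm
      have hkey : Real.exp 1 ≤ ((m + 1 : ℝ) / m) ^ (m + 1) := by
        have h1' : (m : ℝ) / (m + 1) ≤ Real.exp (-(1 / (m + 1))) := by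
          have h := Real.add_one_le_exp (-(1 / (m + 1 : ℝ)))
          have h2 : 1 - 1 / (m + 1 : ℝ) ≤ Real.exp (-(1 / (m + 1))) := by linarith
          calc (m : ℝ) / (m + 1) = 1 - 1 / (m + 1) := by field_simp; ring
            _ ≤ _ := h2
        have h2 : Real.exp (1 / (m + 1 : ℝ)) ≤ (m + 1 : ℝ) / m := by
          rw [show (1 : ℝ) / (m+1) = -(-(1/(m+1))) by ring, Real.exp_neg]
          rw [inv_le_comm₀ (Real.exp_pos _) (by positivity)]
          rw [inv_div]
          exact h1'
        calc Real.exp 1 = Real.exp (1 / (m + 1 : ℝ)) ^ (m + 1) := by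
              rw [← Real.exp_nat_mul]; push_cast; rw [mul_one_div, div_self (by positivity)]
          _ ≤ ((m + 1 : ℝ) / m) ^ (m + 1) := pow_le_pow_left₀ (Real.exp_pos _).le h2 _
      -- m^{m+1} * e ≤ (m+1)^{m+1}
      have hpow : (m:ℝ) ^ (m+1) * Real.exp 1 ≤ ((m:ℝ) + 1) ^ (m + 1) := by
        have := mul_le_mul_of_nonneg_left hkey (by positivity : (0:ℝ) ≤ (m:ℝ) ^ (m+1))
        calc (m:ℝ) ^ (m+1) * Real.exp 1 ≤ (m:ℝ)^(m+1) * (((m:ℝ)+1)/m)^(m+1) := this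
          _ = ((m:ℝ)+1)^(m+1) := by rw [div_pow]; field_simp
      have hstep : (m : ℝ) * ((m : ℝ) / Real.exp 1) ^ m ≤ ((m + 1 : ℝ) / Real.exp 1) ^ (m + 1) := by
        rw [div_pow, div_pow, ← mul_div_assoc, div_le_div_iff₀ (by positivity) (by positivity)]
        calc (m:ℝ) * (m:ℝ)^m * Real.exp 1 ^ (m+1)
            = ((m:ℝ)^(m+1) * Real.exp 1) * Real.exp 1 ^ m := by ring
          _ ≤ ((m:ℝ)+1)^(m+1) * Real.exp 1 ^ m := by
              exact mul_le_mul_of_nonneg_right hpow (by positivity)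
          _ = ((m:ℝ)+1)^(m+1) * Real.exp 1 ^ m := rfl
      have : (Nat.factorial (m+1) : ℝ) = (m+1) * Nat.factorial m := by
        push_cast [Nat.factorial]; ring
      rw [this]
      calc ((m:ℝ)+1) * Nat.factorial m ≤ ((m:ℝ)+1) * (Real.exp 1 * m * ((m:ℝ)/Real.exp 1)^m) := by
            apply mul_le_mul_of_nonneg_left ihm (by positivity)
        _ = Real.exp 1 * ((m:ℝ)+1) * ((m:ℝ) * ((m:ℝ)/Real.exp 1)^m) := by ring
        _ ≤ Real.exp 1 * ((m:ℝ)+1) * (((m+1:ℝ))/Real.exp 1)^(m+1) := by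
            apply mul_le_mul_of_nonneg_left hstep (by positivity)
        _ = Real.exp 1 * ((m+1:ℕ):ℝ) * (((m+1:ℕ):ℝ)/Real.exp 1)^(m+1) := by push_cast; ring

lemma aux_min_fact (x : ℝ) (hx : 1 ≤ x) :
    (Nat.factorial ⌊x⌋₊ : ℝ) * x⁻¹ ^ ⌊x⌋₊ ≤ Real.exp 2 * x * Real.exp (-x) := by
  have hx0 : (0:ℝ) < x := by linarith
  set r := ⌊x⌋₊ with hr
  have hr1 : 1 ≤ r := Nat.le_floor (by exact_mod_cast hx)
  have hrx : (r : ℝ) ≤ x := Nat.floor_le hx0.le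
  have hxr : x < r + 1 := Nat.lt_floor_add_one x
  have hr0 : (0:ℝ) < r := by exact_mod_cast hr1
  have h1 : (Nat.factorial r : ℝ) ≤ Real.exp 1 * r * ((r:ℝ) / Real.exp 1) ^ r :=
    aux_fact_le r hr1
  have h2 : ((r:ℝ) / Real.exp 1) ^ r * x⁻¹ ^ r = ((r:ℝ)/x) ^ r * (Real.exp (-1)) ^ r := by
    rw [← mul_pow, ← mul_pow, Real.exp_neg]
    ring_nf
  have h3 : ((r:ℝ)/x) ^ r ≤ 1 := pow_le_one₀ (by positivity) (div_le_one_of_le₀ hrx hx0.le)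
  have h4 : (Real.exp (-1)) ^ r = Real.exp (-(r:ℝ)) := by
    rw [← Real.exp_nat_mul]; ring_nf
  have h5 : Real.exp (-(r:ℝ)) ≤ Real.exp 1 * Real.exp (-x) := by
    rw [← Real.exp_add]
    exact Real.exp_le_exp.mpr (by linarith)
  calc (Nat.factorial r : ℝ) * x⁻¹ ^ r
      ≤ (Real.exp 1 * r * ((r:ℝ) / Real.exp 1) ^ r) * x⁻¹ ^ r := by
        exact mul_le_mul_of_nonneg_right h1 (by positivity)
    _ = Real.exp 1 * r * (((r:ℝ)/x) ^ r * (Real.exp (-1)) ^ r) := by rw [← h2]; ring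
    _ ≤ Real.exp 1 * r * (1 * (Real.exp 1 * Real.exp (-x))) := by
        apply mul_le_mul_of_nonneg_left _ (by positivity)
        rw [h4]
        exact mul_le_mul h3 h5 (Real.exp_pos _).le zero_le_one
    _ ≤ Real.exp 1 * x * (1 * (Real.exp 1 * Real.exp (-x))) := by
        apply mul_le_mul_of_nonneg_right _ (by positivity)
        exact mul_le_mul_of_nonneg_left hrx (Real.exp_pos _).le
    _ = Real.exp 2 * x * Real.exp (-x) := by
        rw [show (2:ℝ) = 1 + 1 by norm_num, Real.exp_add]; ring

set_option maxHeartbeats 2000000 in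

/-- Uniqueness of the Borel sum: two functions analytic on
`D_T = {t : ℂ | t ≠ 0 ∧ Re (1/t) > 1/T}` admitting asymptotic expansions with the same
coefficients `(a_r)` and remainders bounded by `K_i · r! · κ⁻ʳ · |t|^r` coincide on `D_T`. -/
theorem stmt_8 (κ T : ℝ) (hκ : 0 < κ) (hT : 0 < T) (f₁ f₂ : ℂ → ℂ) (a : ℕ → ℂ)
    (K₁ K₂ : ℝ) (hK₁ : 0 < K₁) (hK₂ : 0 < K₂)
    (hf₁ : AnalyticOnNhd ℂ f₁ {t : ℂ | t ≠ 0 ∧ 1 / T < (1 / t).re})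
    (hf₂ : AnalyticOnNhd ℂ f₂ {t : ℂ | t ≠ 0 ∧ 1 / T < (1 / t).re})
    (hexp₁ : ∀ (r : ℕ) (t : ℂ), t ≠ 0 → 1 / T < (1 / t).re →
      ‖f₁ t - ∑ k ∈ Finset.range r, a k * t ^ k‖ ≤
        K₁ * (Nat.factorial r) * κ⁻¹ ^ r * ‖t‖ ^ r)
    (hexp₂ : ∀ (r : ℕ) (t : ℂ), t ≠ 0 → 1 / T < (1 / t).re →
      ‖f₂ t - ∑ k ∈ Finset.range r, a k * t ^ k‖ ≤
        K₂ * (Nat.factorial r) * κ⁻¹ ^ r * ‖t‖ ^ r) :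
    ∀ t : ℂ, t ≠ 0 → 1 / T < (1 / t).re → f₁ t = f₂ t := by
  intro t₀ ht₀ ht₀T
  set C := K₁ + K₂ with hCdef
  have hC : 0 < C := by positivity
  set G : ℂ → ℂ := fun w => f₁ w⁻¹ - f₂ w⁻¹ with hGdef
  have hT' : (0:ℝ) < 1 / T := by positivity
  have hdom : ∀ w : ℂ, 1 / T < w.re → w⁻¹ ≠ 0 ∧ 1 / T < (1 / w⁻¹).re := by
    intro w hw
    have hw0 : w ≠ 0 := by
      intro h; rw [h] at hw; simp at hw; linarith
    exact ⟨inv_ne_zero hw0, by rw [one_div w⁻¹, inv_inv]; exact hw⟩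
  have key : ∀ w : ℂ, 1 / T < w.re → ∀ r : ℕ,
      ‖G w‖ ≤ C * (Nat.factorial r) * κ⁻¹ ^ r * (‖w‖)⁻¹ ^ r := by
    intro w hw r
    obtain ⟨h0, h1⟩ := hdom w hw
    have e1 := hexp₁ r _ h0 h1
    have e2 := hexp₂ r _ h0 h1
    have habs : ‖w⁻¹‖ = (‖w‖)⁻¹ := norm_inv _
    have tri : ‖G w‖ ≤
        ‖f₁ w⁻¹ - ∑ k ∈ Finset.range r, a k * (w⁻¹) ^ k‖
        + ‖f₂ w⁻¹ - ∑ k ∈ Finset.range r, a k * (w⁻¹) ^ k‖ := by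
      have := norm_sub_le_norm_sub_add_norm_sub (f₁ w⁻¹) (∑ k ∈ Finset.range r, a k * (w⁻¹) ^ k) (f₂ w⁻¹)
      rwa [norm_sub_rev (∑ k ∈ Finset.range r, a k * (w⁻¹) ^ k) (f₂ w⁻¹)] at this
    calc ‖G w‖ ≤ _ + _ := tri
      _ ≤ K₁ * (Nat.factorial r) * κ⁻¹ ^ r * ‖w⁻¹‖ ^ r
          + K₂ * (Nat.factorial r) * κ⁻¹ ^ r * ‖w⁻¹‖ ^ r := add_le_add e1 e2
      _ = C * (Nat.factorial r) * κ⁻¹ ^ r * (‖w‖)⁻¹ ^ r := by rw [habs, hCdef]; ring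
  have hGC : ∀ w : ℂ, 1 / T < w.re → ‖G w‖ ≤ C := by
    intro w hw; simpa using key w hw 0
  have hGbound : ∀ w : ℂ, 1 / T < w.re → ‖G w‖ ≤
      C * Real.exp 2 * (1 + κ * ‖w‖) * Real.exp (-(κ * ‖w‖)) := by
    intro w hw
    have hw0 : w ≠ 0 := by intro h; rw [h] at hw; simp at hw; linarith
    have haw : 0 < ‖w‖ := norm_pos_iff.mpr hw0
    set x := κ * ‖w‖ with hx
    have hx0 : 0 < x := by positivity
    by_cases hx1 : 1 ≤ x
    · have h := key w hw ⌊x⌋₊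
      have h2 := aux_min_fact x hx1
      have hxx : κ⁻¹ ^ ⌊x⌋₊ * (‖w‖)⁻¹ ^ ⌊x⌋₊ = x⁻¹ ^ ⌊x⌋₊ := by
        rw [← mul_pow, ← mul_inv]
      calc ‖G w‖ ≤ C * (Nat.factorial ⌊x⌋₊) * κ⁻¹ ^ ⌊x⌋₊ * (‖w‖)⁻¹ ^ ⌊x⌋₊ := h
        _ = C * ((Nat.factorial ⌊x⌋₊) * x⁻¹ ^ ⌊x⌋₊) := by rw [← hxx]; ring
        _ ≤ C * (Real.exp 2 * x * Real.exp (-x)) := mul_le_mul_of_nonneg_left h2 hC.le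
        _ ≤ C * Real.exp 2 * (1 + x) * Real.exp (-x) := by
            have : x ≤ 1 + x := by linarith
            have := mul_le_mul_of_nonneg_right
              (mul_le_mul_of_nonneg_left this (by positivity : (0:ℝ) ≤ C * Real.exp 2))
              (Real.exp_pos (-x)).le
            calc C * (Real.exp 2 * x * Real.exp (-x)) = C * Real.exp 2 * x * Real.exp (-x) := by ring
              _ ≤ C * Real.exp 2 * (1 + x) * Real.exp (-x) := this
    · push_neg at hx1
      have h := hGC w hw
      have hge : Real.exp 1 ≤ Real.exp 2 * (1 + x) * Real.exp (-x) := by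
        have h1 : Real.exp (-(1:ℝ)) ≤ Real.exp (-x) := Real.exp_le_exp.mpr (by linarith)
        have h2 : Real.exp 2 * Real.exp (-(1:ℝ)) = Real.exp 1 := by
          rw [← Real.exp_add]; norm_num
        calc Real.exp 1 = Real.exp 2 * Real.exp (-(1:ℝ)) := h2.symm
          _ ≤ Real.exp 2 * Real.exp (-x) := mul_le_mul_of_nonneg_left h1 (Real.exp_pos 2).le
          _ = Real.exp 2 * 1 * Real.exp (-x) := by ring
          _ ≤ Real.exp 2 * (1 + x) * Real.exp (-x) :=
              mul_le_mul_of_nonneg_right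
                (mul_le_mul_of_nonneg_left (by linarith : (1:ℝ) ≤ 1 + x) (Real.exp_pos 2).le)
                (Real.exp_pos _).le
      have h1e : (1:ℝ) ≤ Real.exp 1 := by
        have := Real.add_one_le_exp (1:ℝ); linarith
      calc ‖G w‖ ≤ C := h
        _ = C * 1 := by ring
        _ ≤ C * (Real.exp 2 * (1 + x) * Real.exp (-x)) :=
            mul_le_mul_of_nonneg_left (le_trans h1e hge) hC.le
        _ = C * Real.exp 2 * (1 + x) * Real.exp (-x) := by ring
  -- choose c strictly between 1/T and Re (1/t₀)
  set w₀ : ℂ := t₀⁻¹ with hw₀def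
  have hw₀ : 1 / T < w₀.re := by rw [hw₀def, ← one_div t₀]; exact ht₀T
  set c : ℝ := (1 / T + w₀.re) / 2 with hcdef
  have hc1 : 1 / T < c := by rw [hcdef]; linarith
  have hc2 : c < w₀.re := by rw [hcdef]; linarith
  have hc0 : 0 < c := lt_trans hT' hc1
  have hGdiff : ∀ w : ℂ, 1 / T < w.re → DifferentiableAt ℂ G w := by
    intro w hw
    have hw0 : w ≠ 0 := by intro h; rw [h] at hw; simp at hw; linarith
    have hmem : w⁻¹ ∈ {t : ℂ | t ≠ 0 ∧ 1 / T < (1 / t).re} := hdom w hw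
    have dinv : DifferentiableAt ℂ (fun w : ℂ => w⁻¹) w := differentiableAt_id.inv hw0
    exact ((hf₁ _ hmem).differentiableAt.comp w dinv).sub
      ((hf₂ _ hmem).differentiableAt.comp w dinv)
  -- sector estimate: arbitrary exponential decay rate on the ray c + (0,∞)
  have hsector : ∀ ν : ℝ, κ ≤ ν → ∃ M : ℝ, ∀ s : ℝ, 0 < s →
      ‖G (↑c + ↑s)‖ ≤ M * Real.exp (-(ν * s)) := by
    intro ν hν
    have hν0 : 0 < ν := lt_of_lt_of_le hκ hν
    set q : ℝ := κ / (2 * ν) with hq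
    have hq0 : 0 < q := by positivity
    have hq1 : q < 1 := by rw [hq, div_lt_one (by positivity)]; linarith
    set σ := Real.arccos q with hσ
    have hσcos : Real.cos σ = q := Real.cos_arccos (by linarith) (by linarith)
    have hσpos : 0 < σ := Real.arccos_pos.mpr hq1
    have hσlt : σ < π / 2 := Real.arccos_lt_pi_div_two.mpr hq0
    have hνq : ν * q = κ / 2 := by rw [hq]; field_simp
    set H : ℂ → ℂ := fun u => G (↑c + Complex.exp u) * Complex.exp (↑ν * Complex.exp u) with hH
    have hHdiff : ∀ u : ℂ, |u.im| < π / 2 → DifferentiableAt ℂ H u := by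
      intro u hu
      obtain ⟨hu1, hu2⟩ := abs_lt.mp hu
      have hcos : 0 ≤ Real.cos u.im :=
        Real.cos_nonneg_of_mem_Icc ⟨by linarith, by linarith⟩
      have hre : 1 / T < (↑c + Complex.exp u).re := by
        rw [Complex.add_re, Complex.ofReal_re, Complex.exp_re]
        nlinarith [Real.exp_pos u.re, hc1]
      have d1 : DifferentiableAt ℂ (fun u : ℂ => ↑c + Complex.exp u) u :=
        (differentiableAt_const _).add (Complex.differentiable_exp u)
      exact ((hGdiff _ hre).comp u d1).mul
        (((differentiableAt_const ((ν : ℂ))).mul (Complex.differentiable_exp u)).cexp)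
    have hmono : Complex.im ⁻¹' Ioo (-σ) σ ⊆ {u : ℂ | |u.im| < π / 2} := by
      intro u hu
      simp only [mem_preimage, mem_Ioo] at hu
      simp only [mem_setOf_eq, abs_lt]
      exact ⟨by linarith [hu.1], by linarith [hu.2]⟩
    have hclos : closure (Complex.im ⁻¹' Ioo (-σ) σ) ⊆ {u : ℂ | |u.im| < π / 2} := by
      have h1 : closure (Complex.im ⁻¹' Ioo (-σ) σ) ⊆ Complex.im ⁻¹' Icc (-σ) σ :=
        closure_minimal (preimage_mono Ioo_subset_Icc_self)
          (isClosed_Icc.preimage Complex.continuous_im)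
      intro u hu
      have h2 := h1 hu
      simp only [mem_preimage, mem_Icc] at h2
      simp only [mem_setOf_eq, abs_lt]
      exact ⟨by linarith [h2.1], by linarith [h2.2]⟩
    have hHd : DiffContOnCl ℂ H (Complex.im ⁻¹' Ioo (-σ) σ) :=
      ⟨fun u hu => (hHdiff u (hmono hu)).differentiableWithinAt,
       fun u hu => (hHdiff u (hclos hu)).continuousAt.continuousWithinAt⟩
    have hHnorm : ∀ u : ℂ, ‖H u‖ =
        ‖G (↑c + Complex.exp u)‖ * Real.exp (ν * (Complex.exp u).re) := by
      intro u
      rw [hH]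
      simp only [norm_mul, Complex.norm_exp]
      rw [Complex.re_ofReal_mul]
    set M₀ : ℝ := C * Real.exp 2 * Real.exp (κ * c) * (3 + κ * c) with hM₀
    have hbdry : ∀ u : ℂ, u.im = -σ ∨ u.im = σ → ‖H u‖ ≤ M₀ := by
      intro u him
      set s := Real.exp u.re with hs
      have hs0 : 0 < s := Real.exp_pos _
      set w : ℂ := ↑c + Complex.exp u with hw
      have hcosu : Real.cos u.im = q := by
        rcases him with h | h <;> rw [h] <;> simp [hσcos]
      have hwre : 1 / T < w.re := by
        rw [hw, Complex.add_re, Complex.ofReal_re, Complex.exp_re, hcosu]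
        nlinarith [hs0, hq0, hc1]
      have habse : ‖Complex.exp u‖ = s := Complex.norm_exp u
      have habsc : ‖(c : ℂ)‖ = c := by
        rw [Complex.norm_real, Real.norm_of_nonneg hc0.le]
      have haw1 : ‖w‖ ≤ s + c := by
        rw [hw]
        calc ‖↑c + Complex.exp u‖
            ≤ ‖(c:ℂ)‖ + ‖Complex.exp u‖ := norm_add_le _ _
          _ = s + c := by rw [habse, habsc]; ring
      have haw2 : s - c ≤ ‖w‖ := by
        have h1 : ‖Complex.exp u‖ ≤ ‖w‖ + ‖(c:ℂ)‖ := by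
          calc ‖Complex.exp u‖ = ‖w + (-(c:ℂ))‖ := by rw [hw]; ring_nf
            _ ≤ ‖w‖ + ‖-(c:ℂ)‖ := norm_add_le _ _
            _ = ‖w‖ + ‖(c:ℂ)‖ := by rw [norm_neg]
        rw [habse, habsc] at h1
        linarith
      have hexpre : (Complex.exp u).re = s * q := by rw [Complex.exp_re, hcosu]
      have hνsq : ν * (s * q) = κ * s / 2 := by rw [← mul_assoc, mul_comm ν s, mul_assoc, hνq]; ring
      have haw0 : 0 ≤ ‖w‖ := norm_nonneg w
      have hmain : ‖G w‖ * Real.exp (ν * (s * q)) ≤ M₀ := by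
        have step1 : ‖G w‖ * Real.exp (ν * (s * q)) ≤
            C * Real.exp 2 * (1 + κ * ‖w‖) *
              Real.exp (κ * s / 2 - κ * ‖w‖) := by
          rw [hνsq]
          calc ‖G w‖ * Real.exp (κ * s / 2)
              ≤ (C * Real.exp 2 * (1 + κ * ‖w‖) * Real.exp (-(κ * ‖w‖))) *
                  Real.exp (κ * s / 2) :=
                mul_le_mul_of_nonneg_right (hGbound w hwre) (Real.exp_pos _).le
            _ = C * Real.exp 2 * (1 + κ * ‖w‖) *
                  Real.exp (κ * s / 2 - κ * ‖w‖) := by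
                rw [mul_assoc (C * Real.exp 2 * (1 + κ * ‖w‖)), ← Real.exp_add]
                ring_nf
        have step2 : C * Real.exp 2 * (1 + κ * ‖w‖) *
            Real.exp (κ * s / 2 - κ * ‖w‖) ≤
            C * Real.exp 2 * (1 + κ * (s + c)) * Real.exp (κ * c - κ * s / 2) := by
          have e1 : 1 + κ * ‖w‖ ≤ 1 + κ * (s + c) := by nlinarith
          have e2 : κ * s / 2 - κ * ‖w‖ ≤ κ * c - κ * s / 2 := by nlinarith
          have e3 : Real.exp (κ * s / 2 - κ * ‖w‖) ≤ Real.exp (κ * c - κ * s / 2) :=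
            Real.exp_le_exp.mpr e2
          have h01 : (0:ℝ) ≤ C * Real.exp 2 := by positivity
          have h02 : (0:ℝ) ≤ 1 + κ * ‖w‖ := by nlinarith
          calc C * Real.exp 2 * (1 + κ * ‖w‖) * Real.exp (κ * s / 2 - κ * ‖w‖)
              ≤ C * Real.exp 2 * (1 + κ * ‖w‖) * Real.exp (κ * c - κ * s / 2) := by
                apply mul_le_mul_of_nonneg_left e3 (by positivity)
            _ ≤ C * Real.exp 2 * (1 + κ * (s + c)) * Real.exp (κ * c - κ * s / 2) := by
                apply mul_le_mul_of_nonneg_right _ (Real.exp_pos _).le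
                exact mul_le_mul_of_nonneg_left e1 h01
        have step3 : C * Real.exp 2 * (1 + κ * (s + c)) * Real.exp (κ * c - κ * s / 2) ≤ M₀ := by
          have hy : κ * s * Real.exp (-(κ * s / 2)) ≤ 2 := by
            have h1 : κ * s / 2 + 1 ≤ Real.exp (κ * s / 2) := by
              have := Real.add_one_le_exp (κ * s / 2); linarith
            have h2 : 0 < Real.exp (κ * s / 2) := Real.exp_pos _
            rw [Real.exp_neg, mul_inv_le_iff₀ h2]
            nlinarith
          have he1 : Real.exp (-(κ * s / 2)) ≤ 1 := by
            rw [Real.exp_le_one_iff]; nlinarith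
          have he0 : 0 ≤ Real.exp (-(κ * s / 2)) := (Real.exp_pos _).le
          have hfac : (1 + κ * (s + c)) * Real.exp (-(κ * s / 2)) ≤ 3 + κ * c := by
            have hcc : κ * c * Real.exp (-(κ * s / 2)) ≤ κ * c :=
              mul_le_of_le_one_right (by positivity) he1
            nlinarith
          have hsplit : Real.exp (κ * c - κ * s / 2) =
              Real.exp (κ * c) * Real.exp (-(κ * s / 2)) := by
            rw [← Real.exp_add]; ring_nf
          rw [hM₀, hsplit]
          calc C * Real.exp 2 * (1 + κ * (s + c)) * (Real.exp (κ * c) * Real.exp (-(κ * s / 2)))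
              = C * Real.exp 2 * Real.exp (κ * c) *
                  ((1 + κ * (s + c)) * Real.exp (-(κ * s / 2))) := by ring
            _ ≤ C * Real.exp 2 * Real.exp (κ * c) * (3 + κ * c) := by
                apply mul_le_mul_of_nonneg_left hfac (by positivity)
        exact le_trans (le_trans step1 step2) step3
      rw [hHnorm u, hexpre]
      exact hmain
    have hray : ∀ s : ℝ, 0 < s → ‖G (↑c + ↑s)‖ * Real.exp (ν * s) ≤ M₀ := by
      intro s hs
      have hu : ((Real.log s : ℝ) : ℂ).im = 0 := Complex.ofReal_im _
      have happ : ‖H ((Real.log s : ℝ) : ℂ)‖ ≤ M₀ := by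
        refine PhragmenLindelof.horizontal_strip hHd ⟨1, ?_, κ + ν, ?_⟩
          (fun z hz => hbdry z (Or.inl hz)) (fun z hz => hbdry z (Or.inr hz))
          (by rw [hu]; linarith) (by rw [hu]; linarith)
        · rw [show σ - -σ = 2 * σ by ring, lt_div_iff₀ (by positivity), one_mul]
          linarith
        · apply Asymptotics.IsBigO.of_bound C
          rw [Filter.eventually_inf_principal]
          refine Filter.Eventually.of_forall fun u hu' => ?_
          have hmem : |u.im| < π / 2 := hmono hu'
          obtain ⟨hu1, hu2⟩ := abs_lt.mp hmem
          have hcos : 0 ≤ Real.cos u.im :=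
            Real.cos_nonneg_of_mem_Icc ⟨by linarith, by linarith⟩
          have hre' : 1 / T < (↑c + Complex.exp u).re := by
            rw [Complex.add_re, Complex.ofReal_re, Complex.exp_re]
            nlinarith [Real.exp_pos u.re, hc1]
          have h1 : ‖G (↑c + Complex.exp u)‖ ≤ C := hGC _ hre'
          have h2 : ν * (Complex.exp u).re ≤ (κ + ν) * Real.exp (1 * |u.re|) := by
            have ha : (Complex.exp u).re ≤ Real.exp u.re := by
              rw [Complex.exp_re]
              nlinarith [Real.cos_le_one u.im, Real.exp_pos u.re]
            have hb : Real.exp u.re ≤ Real.exp |u.re| :=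
              Real.exp_le_exp.mpr (le_abs_self _)
            have hc' : 0 < Real.exp |u.re| := Real.exp_pos _
            rw [one_mul]
            have hXE : ν * (Complex.exp u).re ≤ ν * Real.exp |u.re| :=
              mul_le_mul_of_nonneg_left (ha.trans hb) hν0.le
            nlinarith [mul_pos hκ hc']
          rw [hHnorm u]
          have : ‖G (↑c + Complex.exp u)‖ * Real.exp (ν * (Complex.exp u).re) ≤
              C * Real.exp ((κ + ν) * Real.exp (1 * |u.re|)) :=
            mul_le_mul h1 (Real.exp_le_exp.mpr h2) (Real.exp_pos _).le hC.le
          calc ‖G (↑c + Complex.exp u)‖ * Real.exp (ν * (Complex.exp u).re)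
              ≤ C * Real.exp ((κ + ν) * Real.exp (1 * |u.re|)) := this
            _ = C * ‖Real.exp ((κ + ν) * Real.exp (1 * |u.re|))‖ := by
                rw [Real.norm_eq_abs, abs_of_pos (Real.exp_pos _)]
      have hexplog : Complex.exp ((Real.log s : ℝ) : ℂ) = ((s : ℝ) : ℂ) := by
        rw [← Complex.ofReal_exp, Real.exp_log hs]
      rw [hHnorm _, hexplog] at happ
      rwa [Complex.ofReal_re] at happ
    refine ⟨M₀, fun s hs => ?_⟩
    have h1 := hray s hs
    have h2 : ‖G (↑c + ↑s)‖ ≤ M₀ / Real.exp (ν * s) :=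
      (le_div_iff₀ (Real.exp_pos _)).mpr h1
    rwa [div_eq_mul_inv, ← Real.exp_neg] at h2
  -- final application of Phragmen–Lindelöf in the right half-plane
  set h : ℂ → ℂ := fun z => G (z + ↑c) with hhdef
  have hhdiff : ∀ z : ℂ, 0 ≤ z.re → DifferentiableAt ℂ h z := by
    intro z hz
    have : 1 / T < (z + ↑c).re := by
      rw [Complex.add_re, Complex.ofReal_re]; linarith
    exact (hGdiff _ this).comp z (differentiableAt_id.add_const _)
  have hhd : DiffContOnCl ℂ h {z : ℂ | 0 < z.re} := by
    refine ⟨fun z hz => (hhdiff z (le_of_lt hz)).differentiableWithinAt, ?_⟩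
    intro z hz
    rw [Complex.closure_setOf_lt_re] at hz
    exact (hhdiff z hz).continuousAt.continuousWithinAt
  have hzero : EqOn h 0 {z : ℂ | 0 ≤ z.re} := by
    refine PhragmenLindelof.eq_zero_on_right_half_plane_of_superexponential_decay hhd
      ⟨1, one_lt_two, 0, Asymptotics.IsBigO.of_bound C ?_⟩ ?_ ⟨C, fun x => ?_⟩
    · rw [Filter.eventually_inf_principal]
      refine Filter.Eventually.of_forall fun z hz => ?_
      have hz' : 1 / T < (z + ↑c).re := by
        rw [Complex.add_re, Complex.ofReal_re]
        have : (0:ℝ) < z.re := hz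
        linarith
      have hb := hGC _ hz'
      simp only [Real.norm_eq_abs, zero_mul, Real.exp_zero, abs_one, mul_one]
      exact hb
    · intro n
      obtain ⟨M, hM⟩ := hsector (κ + n + 1) (by
        have : (0:ℝ) ≤ n := Nat.cast_nonneg n
        linarith)
      apply squeeze_zero' (g := fun x : ℝ => M * Real.exp (-((κ + 1) * x)))
      · exact Filter.Eventually.of_forall fun x => by positivity
      · filter_upwards [eventually_gt_atTop (0:ℝ)] with x hx
        have hb := hM x hx
        have hval : ‖h ((x : ℝ) : ℂ)‖ = ‖G (↑c + ↑x)‖ := by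
          rw [hhdef]
          beta_reduce
          rw [add_comm]
        rw [hval]
        have hmul : Real.exp x ^ n * ‖G (↑c + ↑x)‖ ≤
            Real.exp x ^ n * (M * Real.exp (-((κ + ↑n + 1) * x))) :=
          mul_le_mul_of_nonneg_left hb (by positivity)
        refine le_trans hmul (le_of_eq ?_)
        rw [← Real.exp_nat_mul, ← mul_assoc, mul_comm (Real.exp (↑n * x)) M, mul_assoc,
          ← Real.exp_add]
        ring_nf
      · have h1 : Tendsto (fun x : ℝ => (κ + 1) * x) atTop atTop :=
          Tendsto.const_mul_atTop (by linarith) tendsto_id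
        have h2 : Tendsto (fun x : ℝ => -((κ + 1) * x)) atTop atBot :=
          tendsto_neg_atBot_iff.mpr h1
        have h3 : Tendsto (fun x : ℝ => Real.exp (-((κ + 1) * x))) atTop (𝓝 0) :=
          Real.tendsto_exp_atBot.comp h2
        simpa using h3.const_mul M
    · have hre' : 1 / T < ((x : ℂ) * Complex.I + ↑c).re := by
        simp [Complex.add_re, Complex.mul_re]
        rw [← one_div]; exact hc1
      have := hGC _ hre'
      simpa [hhdef] using this
  have hmem0 : (w₀ - ↑c) ∈ {z : ℂ | 0 ≤ z.re} := by
    simp only [mem_setOf_eq, Complex.sub_re, Complex.ofReal_re]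
    linarith
  have hh0 := hzero hmem0
  have hGw₀ : G w₀ = 0 := by
    have : h (w₀ - ↑c) = G w₀ := by rw [hhdef]; simp [sub_add_cancel]
    rw [← this, hh0]; rfl
  have : f₁ t₀ - f₂ t₀ = 0 := by
    have hG : G w₀ = f₁ (w₀⁻¹) - f₂ (w₀⁻¹) := rfl
    rw [hw₀def, inv_inv] at hG
    rw [← hG]; exact hGw₀
  exact sub_eq_zero.mp this
end
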